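/- Let F : [0,∞)^K → [0,∞) be a generalised e-merging function (in the sense that its composition with any tuple of e-variables on a finite probability space is an e-variable). Then its concave envelope F̂ on [0,∞)^K is finite at (1,…,1), satisfies F̂(1,…,1) ≤ 1, and F̂ is itself dominated by an affine function G with G(1,…,1) ≤ 1, G ≥ 0 on [0,∞)^K. -/

import Mathlib

open BigOperators

/-- The concave envelope of `F` on the nonnegative orthant `[0,∞)^K`, valued in
`EReal`: the pointwise infimum, over all concave functions `g` on the orthant
dominating `F` there, of `g u`. -/
noncomputable def concaveEnvelope (K : ℕ) (F : (Fin K → ℝ) → ℝ)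
    (u : Fin K → ℝ) : EReal :=
  sInf {t : EReal | ∃ g : (Fin K → ℝ) → ℝ,
    ConcaveOn ℝ {v : Fin K → ℝ | ∀ k, 0 ≤ v k} g ∧
    (∀ v : Fin K → ℝ, (∀ k, 0 ≤ v k) → F v ≤ g v) ∧
    t = (g u : EReal)}

/-- if `F` is a generalised e-merging function (with respect to
finite probability spaces), then its concave envelope is finite at `(1,…,1)`,
at most 1 there, and is dominated on the orthant by an affine function `G`
with `G(1,…,1) ≤ 1` and `G ≥ 0` on the orthant. -/
lemma hull_bound (K : ℕ) (hK : 1 ≤ K) (F : (Fin K → ℝ) → ℝ)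
    (hF0 : ∀ u : Fin K → ℝ, (∀ k, 0 ≤ u k) → 0 ≤ F u)
    (hmerge : ∀ (n : ℕ) (q : Fin n → ℝ) (E : Fin K → Fin n → ℝ),
      (∀ j, 0 ≤ q j) → ∑ j, q j = 1 →
      (∀ k j, 0 ≤ E k j) → (∀ k, ∑ j, q j * E k j ≤ 1) →
      ∑ j, q j * F (fun k => E k j) ≤ 1)
    {p : (Fin K → ℝ) × ℝ}
    (hp : p ∈ convexHull ℝ {p : (Fin K → ℝ) × ℝ | (∀ k, 0 ≤ p.1 k) ∧ p.2 ≤ F p.1}) :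
    p.2 ≤ 1 ∨ ∃ k, p.2 ≤ p.1 k := by
  haveI : Nonempty (Fin K) := ⟨⟨0, hK⟩⟩
  obtain ⟨ι, _, w, z, hw0, hw1, hz, hx⟩ := mem_convexHull_iff_exists_fintype.mp hp
  have hu : ∀ k, p.1 k = ∑ i, w i * (z i).1 k := by
    intro k
    rw [← hx]
    simp [Prod.fst_sum, Finset.sum_apply]
  have ht : p.2 = ∑ i, w i * (z i).2 := by
    rw [← hx]
    simp [Prod.snd_sum]
  have hune : (Finset.univ : Finset (Fin K)).Nonempty := Finset.univ_nonempty
  set M : ℝ := max 1 (Finset.univ.sup' hune p.1) with hM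
  have hM1 : (1:ℝ) ≤ M := le_max_left _ _
  have hMpos : (0:ℝ) < M := lt_of_lt_of_le one_pos hM1
  have huM : ∀ k, p.1 k ≤ M := fun k =>
    le_trans (Finset.le_sup' p.1 (Finset.mem_univ k)) (le_max_right _ _)
  -- apply hmerge
  set n := Fintype.card ι with hn
  let e := Fintype.equivFin ι
  set q : Fin (n+1) → ℝ := Fin.snoc (fun j => w (e.symm j) / M) (1 - 1/M) with hq
  set Ee : Fin K → Fin (n+1) → ℝ := fun k => Fin.snoc (fun j => (z (e.symm j)).1 k) 0 with hE
  have hsum_w : ∀ g : ι → ℝ, ∑ j : Fin n, g (e.symm j) = ∑ i, g i := by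
    intro g; exact Equiv.sum_comp e.symm g
  have hq0 : ∀ j, 0 ≤ q j := by
    intro j
    refine Fin.lastCases ?_ ?_ j
    · simp only [hq, Fin.snoc_last, sub_nonneg]
      rw [div_le_one hMpos]; exact hM1
    · intro j
      simp [hq, Fin.snoc_castSucc]
      exact div_nonneg (hw0 _) hMpos.le
  have hq1 : ∑ j, q j = 1 := by
    rw [Fin.sum_univ_castSucc]
    simp only [hq, Fin.snoc_castSucc, Fin.snoc_last]
    rw [← Finset.sum_div, hsum_w w, hw1]
    field_simp
    ring
  have hE0 : ∀ k j, 0 ≤ Ee k j := by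
    intro k j
    refine Fin.lastCases ?_ ?_ j
    · simp [hE, Fin.snoc_last]
    · intro j; simp only [hE, Fin.snoc_castSucc]
      exact (hz _).1 k
  have hEmean : ∀ k, ∑ j, q j * Ee k j ≤ 1 := by
    intro k
    rw [Fin.sum_univ_castSucc]
    simp only [hq, hE, Fin.snoc_castSucc, Fin.snoc_last, mul_zero, add_zero]
    have : ∑ j : Fin n, w (e.symm j) / M * (z (e.symm j)).1 k
        = (∑ i, w i * (z i).1 k) / M := by
      rw [← hsum_w (fun i => w i * (z i).1 k), Finset.sum_div]
      exact Finset.sum_congr rfl (fun j _ => by ring)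
    rw [this, ← hu k, div_le_one hMpos]
    exact huM k
  have key := hmerge (n+1) q Ee hq0 hq1 hE0 hEmean
  rw [Fin.sum_univ_castSucc] at key
  have hlastF : (fun k => Ee k (Fin.last n)) = fun _ => (0:ℝ) := by
    funext k; simp [hE, Fin.snoc_last]
  have hcastF : ∀ j : Fin n, (fun k => Ee k j.castSucc) = (z (e.symm j)).1 := by
    intro j; funext k; simp [hE, Fin.snoc_castSucc]
  have hlast0 : 0 ≤ q (Fin.last n) * F (fun k => Ee k (Fin.last n)) := by
    rw [hlastF]
    exact mul_nonneg (hq0 _) (hF0 _ (fun k => le_refl 0))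
  have hsumF : ∑ j : Fin n, q j.castSucc * F (fun k => Ee k j.castSucc)
      = (∑ i, w i * F (z i).1) / M := by
    rw [← hsum_w (fun i => w i * F (z i).1), Finset.sum_div]
    refine Finset.sum_congr rfl (fun j _ => ?_)
    rw [hcastF j]
    simp [hq, Fin.snoc_castSucc]
    ring
  have hFM : ∑ i, w i * F (z i).1 ≤ M := by
    rw [hsumF] at key
    rw [← div_le_one hMpos] at *
    linarith
  have hpM : p.2 ≤ M := by
    rw [ht]
    refine le_trans (Finset.sum_le_sum (fun i _ => ?_)) hFM
    exact mul_le_mul_of_nonneg_left (hz i).2 (hw0 i)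
  rcases le_total (Finset.univ.sup' hune p.1) 1 with h | h
  · left; rwa [hM, max_eq_left h] at hpM
  · right
    obtain ⟨k, _, hk⟩ := Finset.exists_mem_eq_sup' hune p.1
    exact ⟨k, by rwa [hM, max_eq_right h, hk] at hpM⟩

theorem stmt_12 (K : ℕ) (hK : 1 ≤ K) (F : (Fin K → ℝ) → ℝ)
    (hF0 : ∀ u : Fin K → ℝ, (∀ k, 0 ≤ u k) → 0 ≤ F u)
    (hmerge : ∀ (n : ℕ) (q : Fin n → ℝ) (E : Fin K → Fin n → ℝ),
      (∀ j, 0 ≤ q j) → ∑ j, q j = 1 →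
      (∀ k j, 0 ≤ E k j) → (∀ k, ∑ j, q j * E k j ≤ 1) →
      ∑ j, q j * F (fun k => E k j) ≤ 1) :
    concaveEnvelope K F (fun _ => 1) ≠ ⊤ ∧
    concaveEnvelope K F (fun _ => 1) ≠ ⊥ ∧
    concaveEnvelope K F (fun _ => 1) ≤ 1 ∧
    ∃ (c : ℝ) (w : Fin K → ℝ),
      (c + ∑ k, w k * 1 ≤ 1) ∧
      (∀ u : Fin K → ℝ, (∀ k, 0 ≤ u k) → 0 ≤ c + ∑ k, w k * u k) ∧
      (∀ u : Fin K → ℝ, (∀ k, 0 ≤ u k) →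
        concaveEnvelope K F u ≤ ((c + ∑ k, w k * u k : ℝ) : EReal)) := by
  haveI : Nonempty (Fin K) := ⟨⟨0, hK⟩⟩
  set A : Set ((Fin K → ℝ) × ℝ) := {p | (∀ k, 0 ≤ p.1 k) ∧ p.2 ≤ F p.1} with hA
  set C := convexHull ℝ A with hC
  set D : Set ((Fin K → ℝ) × ℝ) := {p | p.2 ≤ 1 ∨ ∃ k, p.2 ≤ p.1 k} with hD
  have hDclosed : IsClosed D := by
    have : D = {p : (Fin K → ℝ) × ℝ | p.2 ≤ 1} ∪ ⋃ k, {p : (Fin K → ℝ) × ℝ | p.2 ≤ p.1 k} := by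
      ext p; simp [hD]
    rw [this]
    refine (isClosed_le continuous_snd continuous_const).union ?_
    exact isClosed_iUnion_of_finite fun k =>
      isClosed_le continuous_snd ((continuous_apply k).comp continuous_fst)
  have hCD : closure C ⊆ D :=
    closure_minimal (fun p hp => hull_bound K hK F hF0 hmerge hp) hDclosed
  -- interior point
  set z0 : (Fin K → ℝ) × ℝ := ((fun _ => 1), -1) with hz0def
  have hz0 : z0 ∈ interior (closure C) := by
    rw [mem_interior]
    refine ⟨(Set.univ.pi fun _ => Set.Ioi (0:ℝ)) ×ˢ Set.Iio (0:ℝ), ?_, ?_, ?_⟩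
    · intro p hp
      apply subset_closure
      apply subset_convexHull
      obtain ⟨hp1, hp2⟩ := hp
      refine ⟨fun k => (hp1 k (Set.mem_univ k)).le, ?_⟩
      exact le_trans hp2.le (hF0 _ fun k => (hp1 k (Set.mem_univ k)).le)
    · exact (isOpen_set_pi Set.finite_univ fun _ _ => isOpen_Ioi).prod isOpen_Iio
    · refine ⟨fun k _ => ?_, by norm_num [hz0def]⟩
      simp [hz0def]
  -- the point to separate
  set x0 : (Fin K → ℝ) × ℝ := ((fun _ => 1), 1) with hx0def
  have hx0 : x0 ∉ interior (closure C) := by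
    intro hmem
    have hnhds : closure C ∈ nhds x0 := mem_interior_iff_mem_nhds.mp hmem
    obtain ⟨ε, hε, hball⟩ := Metric.mem_nhds_iff.mp hnhds
    set y : (Fin K → ℝ) × ℝ := ((fun _ => 1), 1 + ε/2) with hy
    have hyball : y ∈ Metric.ball x0 ε := by
      rw [Metric.mem_ball, Prod.dist_eq]
      have h1 : dist y.1 x0.1 = 0 := by simp [hy, hx0def]
      have h2 : dist y.2 x0.2 = ε/2 := by
        simp [hy, hx0def, Real.dist_eq, abs_of_nonneg hε.le]
      rw [h1, h2]
      simp only [max_lt_iff]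
      constructor <;> linarith
    have hyD : y ∈ D := hCD (hball hyball)
    rcases hyD with h | ⟨k, h⟩
    · simp only [hy] at h; linarith
    · simp only [hy] at h; linarith
  -- separation
  have hconv : Convex ℝ (interior (closure C)) :=
    ((convex_convexHull ℝ A).closure).interior
  obtain ⟨f, hf⟩ := geometric_hahn_banach_open_point hconv isOpen_interior hx0
  -- f ≤ f x0 on closure C
  have hfle : ∀ a ∈ closure C, f a ≤ f x0 := by
    intro a ha
    by_contra hgt
    push_neg at hgt
    have hz0lt : f z0 < f x0 := hf z0 hz0
    set d : ℝ := f a - f z0 with hd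
    have hdpos : 0 < d := by simp only [hd]; linarith
    set θ : ℝ := (f a - f x0) / (2 * d) with hθ
    have hθpos : 0 < θ := div_pos (by linarith) (by linarith)
    have hθle : θ ≤ 1/2 := by
      rw [hθ, div_le_iff₀ (by linarith)]
      simp only [hd]; linarith
    have hmem : θ • z0 + (1 - θ) • a ∈ interior (closure C) :=
      ((convex_convexHull ℝ A).closure).combo_interior_closure_mem_interior
        hz0 (by rwa [closure_closure]) hθpos (by linarith) (by ring)
    have hlt := hf _ hmem
    rw [map_add, map_smul, map_smul, smul_eq_mul, smul_eq_mul] at hlt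
    have hθd : θ * d = (f a - f x0) / 2 := by
      rw [hθ]; field_simp
    nlinarith [hθd]
  -- extract coefficients
  set b : ℝ := f ((0 : Fin K → ℝ), (1:ℝ)) with hb
  set w' : Fin K → ℝ := fun k => f ((Pi.single k 1 : Fin K → ℝ), (0:ℝ)) with hw'
  have hlin : ∀ (u : Fin K → ℝ) (t : ℝ),
      f (u, t) = (∑ k, u k * w' k) + t * b := by
    intro u t
    have hrep : (u, t) = (∑ k, u k • ((Pi.single k 1 : Fin K → ℝ), (0:ℝ)))
        + t • (((0 : Fin K → ℝ)), (1:ℝ)) := by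
      refine Prod.ext ?_ ?_
      · funext j
        simp [Prod.fst_add, Prod.fst_sum, Prod.smul_mk, Finset.sum_apply,
          Pi.single_apply, mul_ite, Finset.sum_ite_eq']
      · simp [Prod.snd_sum]
    rw [hrep, map_add, map_sum, map_smul, smul_eq_mul]
    congr 1
    refine Finset.sum_congr rfl fun k _ => ?_
    rw [map_smul, smul_eq_mul, hw']
  have hfx0 : f x0 = (∑ k, w' k) + b := by
    rw [hx0def, hlin]; simp
  have hbpos : 0 < b := by
    have := hf z0 hz0
    rw [hz0def, hlin, hfx0] at this
    simp only [one_mul] at this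
    linarith
  -- affine coefficients
  set c : ℝ := 1 + (∑ k, w' k) / b with hc
  set wc : Fin K → ℝ := fun k => -(w' k) / b with hwc
  have hwsum : ∀ u : Fin K → ℝ, ∑ k, wc k * u k = -(∑ k, u k * w' k) / b := by
    intro u
    calc ∑ k, wc k * u k = ∑ k, -(u k * w' k) / b :=
          Finset.sum_congr rfl fun k _ => by rw [hwc]; ring
      _ = (∑ k, -(u k * w' k)) / b := by rw [Finset.sum_div]
      _ = -(∑ k, u k * w' k) / b := by rw [Finset.sum_neg_distrib]
  have hG1 : c + ∑ k, wc k * 1 = 1 := by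
    rw [hwsum, hc]
    field_simp
    ring
  have hFle : ∀ u : Fin K → ℝ, (∀ k, 0 ≤ u k) → F u ≤ c + ∑ k, wc k * u k := by
    intro u hu
    have hmemA : ((u, F u) : (Fin K → ℝ) × ℝ) ∈ closure C :=
      subset_closure (subset_convexHull ℝ A ⟨hu, le_refl _⟩)
    have h1 := hfle _ hmemA
    rw [hlin, hfx0] at h1
    rw [hwsum, hc]
    rw [← sub_nonneg]
    have : 1 + (∑ k, w' k) / b + -(∑ k, u k * w' k) / b - F u
        = ((∑ k, w' k) + b - (∑ k, u k * w' k) - F u * b) / b := by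
      field_simp; ring
    rw [this]
    exact div_nonneg (by linarith) hbpos.le
  -- the affine function as a concave majorant
  set G : (Fin K → ℝ) → ℝ := fun v => c + ∑ k, wc k * v k with hGdef
  have hGconc : ConcaveOn ℝ {v : Fin K → ℝ | ∀ k, 0 ≤ v k} G := by
    constructor
    · intro x hx y hy a b' ha hb' hab
      intro k
      have : (a • x + b' • y) k = a * x k + b' * y k := by
        simp [Pi.add_apply, smul_eq_mul]
      rw [Set.mem_setOf_eq] at hx hy
      rw [this]
      exact add_nonneg (mul_nonneg ha (hx k)) (mul_nonneg hb' (hy k))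
    · intro x hx y hy a b' ha hb' hab
      apply le_of_eq
      have hsum : ∑ k, wc k * (a * x k + b' * y k)
          = a * ∑ k, wc k * x k + b' * ∑ k, wc k * y k := by
        rw [Finset.mul_sum, Finset.mul_sum, ← Finset.sum_add_distrib]
        exact Finset.sum_congr rfl fun k _ => by ring
      have happ : ∀ k, (a • x + b' • y) k = a * x k + b' * y k := by
        intro k; simp [Pi.add_apply, smul_eq_mul]
      simp only [smul_eq_mul, hGdef]
      calc a * (c + ∑ k, wc k * x k) + b' * (c + ∑ k, wc k * y k)
          = (a + b') * c + (a * ∑ k, wc k * x k + b' * ∑ k, wc k * y k) := by ring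
        _ = c + ∑ k, wc k * (a * x k + b' * y k) := by rw [hab, hsum, one_mul]
        _ = c + ∑ k, wc k * (a • x + b' • y) k := by
            simp only [happ]
  have hGmem : ∀ u : Fin K → ℝ, (∀ k, 0 ≤ u k) →
      ((G u : ℝ) : EReal) ∈ {t : EReal | ∃ g : (Fin K → ℝ) → ℝ,
        ConcaveOn ℝ {v : Fin K → ℝ | ∀ k, 0 ≤ v k} g ∧
        (∀ v : Fin K → ℝ, (∀ k, 0 ≤ v k) → F v ≤ g v) ∧
        ((G u : ℝ) : EReal) = (g u : EReal)} := by
    intro u hu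
    exact ⟨G, hGconc, fun v hv => hFle v hv, rfl⟩
  have hle : ∀ u : Fin K → ℝ, (∀ k, 0 ≤ u k) →
      concaveEnvelope K F u ≤ ((G u : ℝ) : EReal) := by
    intro u hu
    exact sInf_le (hGmem u hu)
  have hone : (∀ k : Fin K, (0:ℝ) ≤ (fun _ => (1:ℝ)) k) := fun k => zero_le_one
  have hG1' : G (fun _ => 1) = 1 := hG1
  have henv1 : concaveEnvelope K F (fun _ => 1) ≤ 1 := by
    have := hle (fun _ => 1) hone
    rw [hG1'] at this
    exact le_trans this (by norm_num)
  have henv0 : (0 : EReal) ≤ concaveEnvelope K F (fun _ => 1) := by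
    apply le_sInf
    rintro t ⟨g, hgconc, hgdom, rfl⟩
    have : (0:ℝ) ≤ g (fun _ => 1) := le_trans (hF0 _ hone) (hgdom _ hone)
    exact_mod_cast this
  refine ⟨?_, ?_, henv1, c, wc, ?_, ?_, ?_⟩
  · intro h
    rw [h] at henv1
    have : ((1:ℝ) : EReal) ≠ ⊤ := EReal.coe_ne_top 1
    rw [top_le_iff] at henv1
    rw [show (1 : EReal) = ((1:ℝ) : EReal) by norm_num] at henv1
    exact this henv1
  · intro h
    rw [h] at henv0
    simp at henv0
  · rw [hG1]
  · intro u hu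
    exact le_trans (hF0 u hu) (hFle u hu)
  · intro u hu
    exact hle u hu
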